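/- Let l₁, l₂, l₃ > 0 and define β : ℝ → ℝ by β(θ) = Real.arccos ((l₃²·cos θ − l₁·l₂) / (Real.sqrt (l₁² + l₃²) · Real.sqrt (l₂² + l₃²))). Then as θ → 0, β(θ) = β(0) + (l₃ / (2·(l₁ + l₂)))·θ² + o(|θ|³); i.e. the function θ ↦ β(θ) − β(0) − (l₃/(2(l₁+l₂)))·θ² is o(|θ|³) with respect to the filter 𝓝 0. (Here 2l₃ = l is the length of the common edge of two adjacent triangles, l₁, l₂ are the distances from its midpoint to the two circumcenters, L = l₁ + l₂ is the distance between the circumcenters, θ is the dihedral bending angle, and β(θ) is the external intersection angle of the two circumcircles, so that β(θ) = β(0) + (l/(4L))θ² + o(θ³).) -/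

import Mathlib

open Real Filter Asymptotics

/-- Quadratic remainder bound: if `H` has derivative `H'` near `a` and `H'` is
Lipschitz near `a`, then the first-order Taylor remainder is `O((y-a)²)`. -/
lemma quad_remainder_isBigO {H H' : ℝ → ℝ} {a : ℝ}
    (hd : ∀ᶠ x in nhds a, HasDerivAt H (H' x) x)
    {K : NNReal} {t : Set ℝ} (ht : t ∈ nhds a) (lip : LipschitzOnWith K H' t) :
    (fun y => H y - H a - H' a * (y - a)) =O[nhds a] fun y => (y - a) ^ 2 := by
  obtain ⟨ε, hε, hball⟩ := Metric.mem_nhds_iff.mp (Filter.inter_mem ht hd)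
  rw [isBigO_iff]
  refine ⟨K, ?_⟩
  filter_upwards [Metric.ball_mem_nhds a hε] with y hy
  have hseg : segment ℝ a y ⊆ Metric.ball a ε :=
    (convex_ball a ε).segment_subset (Metric.mem_ball_self hε) hy
  set g : ℝ → ℝ := fun z => H z - H' a * z with hg
  have hder : ∀ z ∈ segment ℝ a y, HasDerivWithinAt g (H' z - H' a) (segment ℝ a y) z := by
    intro z hz
    have hz' := (hball (hseg hz)).2
    have hlin : HasDerivAt (fun z : ℝ => H' a * z) (H' a) z := by
      simpa using (hasDerivAt_id z).const_mul (H' a)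
    exact (hz'.sub hlin).hasDerivWithinAt
  have habs : ∀ z ∈ segment ℝ a y, |z - a| ≤ |y - a| := by
    intro z hz
    rw [segment_eq_image ℝ a y] at hz
    obtain ⟨τ, hτ, rfl⟩ := hz
    have : (1 - τ) • a + τ • y - a = τ * (y - a) := by
      simp [smul_eq_mul]; ring
    rw [this, abs_mul, abs_of_nonneg hτ.1]
    exact mul_le_of_le_one_left (abs_nonneg _) hτ.2
  have hbound : ∀ z ∈ segment ℝ a y, ‖H' z - H' a‖ ≤ (K : ℝ) * |y - a| := by
    intro z hz
    have hz1 : z ∈ t := (hball (hseg hz)).1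
    have ha1 : a ∈ t := (hball (Metric.mem_ball_self hε)).1
    have hlip := lip.dist_le_mul z hz1 a ha1
    rw [Real.dist_eq, Real.dist_eq] at hlip
    calc ‖H' z - H' a‖ = |H' z - H' a| := rfl
      _ ≤ (K : ℝ) * |z - a| := hlip
      _ ≤ (K : ℝ) * |y - a| := by
          exact mul_le_mul_of_nonneg_left (habs z hz) K.2
  have hmv := (convex_segment a y).norm_image_sub_le_of_norm_hasDerivWithin_le hder hbound
    (left_mem_segment ℝ a y) (right_mem_segment ℝ a y)
  have hgy : g y - g a = H y - H a - H' a * (y - a) := by simp [hg]; ring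
  rw [hgy] at hmv
  calc ‖H y - H a - H' a * (y - a)‖ ≤ (K : ℝ) * |y - a| * ‖y - a‖ := hmv
    _ = (K : ℝ) * ‖(y - a) ^ 2‖ := by
        rw [Real.norm_eq_abs, Real.norm_eq_abs, abs_pow]; ring

lemma abs_pow4_isLittleO : (fun θ : ℝ => |θ| ^ 4) =o[nhds 0] fun θ : ℝ => |θ| ^ 3 := by
  rw [isLittleO_iff]
  intro c hc
  filter_upwards [Metric.ball_mem_nhds (0:ℝ) hc] with θ hθ
  rw [Metric.mem_ball, Real.dist_eq, sub_zero] at hθ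
  have h0 : (0:ℝ) ≤ |θ| := abs_nonneg θ
  have : |θ| ^ 4 ≤ c * |θ| ^ 3 := by
    calc |θ| ^ 4 = |θ| * |θ| ^ 3 := by ring
      _ ≤ c * |θ| ^ 3 := mul_le_mul_of_nonneg_right hθ.le (by positivity)
  simpa [abs_of_nonneg (pow_nonneg h0 4), abs_of_nonneg (pow_nonneg h0 3)] using this

/-- Asymptotics of the external intersection angle `β(θ)` of the circumcircles
of two adjacent triangles as the dihedral bending angle `θ → 0`:
`β(θ) = β(0) + (l₃/(2(l₁+l₂)))·θ² + o(|θ|³)`. -/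
theorem bending_angle_asymptotics
    (l₁ l₂ l₃ : ℝ) (h₁ : 0 < l₁) (h₂ : 0 < l₂) (h₃ : 0 < l₃)
    (β : ℝ → ℝ)
    (hβ : ∀ θ : ℝ, β θ =
      arccos ((l₃ ^ 2 * cos θ - l₁ * l₂) / (sqrt (l₁ ^ 2 + l₃ ^ 2) * sqrt (l₂ ^ 2 + l₃ ^ 2)))) :
    (fun θ : ℝ => β θ - β 0 - (l₃ / (2 * (l₁ + l₂))) * θ ^ 2) =o[nhds 0]
      (fun θ : ℝ => |θ| ^ 3) := by
  set A : ℝ := sqrt (l₁ ^ 2 + l₃ ^ 2) * sqrt (l₂ ^ 2 + l₃ ^ 2) with hA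
  have hA0 : 0 < A := by
    apply mul_pos <;> exact Real.sqrt_pos.mpr (by positivity)
  have hA2 : A ^ 2 = (l₁ ^ 2 + l₃ ^ 2) * (l₂ ^ 2 + l₃ ^ 2) := by
    rw [hA, mul_pow, Real.sq_sqrt (by positivity), Real.sq_sqrt (by positivity)]
  set u : ℝ → ℝ := fun x => (l₃ ^ 2 * x - l₁ * l₂) / A with hu
  set H : ℝ → ℝ := fun x => arccos (u x) with hH
  have hucont : Continuous u := by fun_prop
  -- key algebra
  have hkey : 1 - u 1 ^ 2 = (l₃ * (l₁ + l₂) / A) ^ 2 := by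
    rw [hu]
    simp only
    rw [div_pow, div_pow, eq_div_iff (pow_ne_zero 2 hA0.ne'), sub_mul, one_mul,
      div_mul_cancel₀ _ (pow_ne_zero 2 hA0.ne')]
    linear_combination hA2
  have hpos : 0 < l₃ * (l₁ + l₂) / A := by positivity
  have hu1sq : u 1 ^ 2 < 1 := by nlinarith
  have hu1mem : u 1 ∈ Set.Ioo (-1 : ℝ) 1 := by
    constructor <;> nlinarith
  have hsqrt : sqrt (1 - u 1 ^ 2) = l₃ * (l₁ + l₂) / A := by
    rw [hkey, Real.sqrt_sq hpos.le]
  -- derivative function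
  set H' : ℝ → ℝ := fun x => -(l₃ ^ 2 / A) / sqrt (1 - u x ^ 2) with hH'
  have huderiv : ∀ x : ℝ, HasDerivAt u (l₃ ^ 2 / A) x := by
    intro x
    simpa using (((hasDerivAt_id x).const_mul (l₃ ^ 2)).sub_const (l₁ * l₂)).div_const A
  have hevmem : ∀ᶠ x in nhds 1, u x ∈ Set.Ioo (-1 : ℝ) 1 := by
    have : ContinuousAt u 1 := hucont.continuousAt
    exact this.eventually_mem (isOpen_Ioo.mem_nhds hu1mem)
  have hd : ∀ᶠ x in nhds 1, HasDerivAt H (H' x) x := by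
    filter_upwards [hevmem] with x hx
    have h1 : u x ≠ -1 := ne_of_gt hx.1
    have h2 : u x ≠ 1 := ne_of_lt hx.2
    have := (Real.hasDerivAt_arccos h1 h2).comp x (huderiv x)
    refine this.congr_deriv ?_
    rw [hH']
    ring
  -- H' value at 1
  have hH'1 : H' 1 = -(l₃ / (l₁ + l₂)) := by
    rw [hH']
    simp only
    rw [hsqrt]
    field_simp
  -- H' is C¹ at 1, hence locally Lipschitz
  have hsne : sqrt (1 - u 1 ^ 2) ≠ 0 := by rw [hsqrt]; exact hpos.ne'
  have hcd : ContDiffAt ℝ 1 H' 1 := by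
    apply ContDiffAt.div contDiffAt_const
    · exact (Real.contDiffAt_sqrt (by nlinarith)).comp 1
        ((contDiffAt_const.sub ((contDiffAt_id.pow 2).comp 1
          (by exact (contDiffAt_const.mul contDiffAt_id).sub contDiffAt_const |>.div_const A))))
    · exact hsne
  obtain ⟨K, t, ht, lip⟩ := hcd.exists_lipschitzOnWith
  have hbig := quad_remainder_isBigO hd ht lip
  -- compose with cos
  have hcos1 : Filter.Tendsto cos (nhds (0:ℝ)) (nhds 1) := by
    have := Real.continuous_cos.tendsto 0
    rwa [Real.cos_zero] at this
  have hTA : (fun θ : ℝ => H (cos θ) - H 1 - H' 1 * (cos θ - 1)) =O[nhds 0]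
      fun θ : ℝ => (cos θ - 1) ^ 2 := hbig.comp_tendsto hcos1
  have hcos_sq : (fun θ : ℝ => (cos θ - 1) ^ 2) =O[nhds 0] fun θ : ℝ => |θ| ^ 4 := by
    rw [isBigO_iff]
    refine ⟨1/4, Filter.Eventually.of_forall fun θ => ?_⟩
    have hle : 1 - cos θ ≤ θ ^ 2 / 2 := by
      have := Real.one_sub_sq_div_two_le_cos (x := θ); linarith
    have hge : 0 ≤ 1 - cos θ := by linarith [Real.cos_le_one θ]
    have habs : |cos θ - 1| ≤ θ ^ 2 / 2 := by rw [abs_sub_comm, abs_of_nonneg hge]; exact hle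
    have h4 : |θ| ^ 4 = (θ ^ 2) ^ 2 := by rw [← abs_pow]; rw [abs_of_nonneg (by positivity)]; ring
    rw [Real.norm_eq_abs, Real.norm_eq_abs, abs_pow, abs_of_nonneg (pow_nonneg (abs_nonneg θ) 4), h4]
    nlinarith [abs_nonneg (cos θ - 1), sq_nonneg θ]
  have hTA' : (fun θ : ℝ => H (cos θ) - H 1 - H' 1 * (cos θ - 1)) =o[nhds 0]
      fun θ : ℝ => |θ| ^ 3 := (hTA.trans hcos_sq).trans_isLittleO abs_pow4_isLittleO
  -- cos Taylor term
  have hTB0 : (fun θ : ℝ => cos θ - 1 + θ ^ 2 / 2) =O[nhds 0] fun θ : ℝ => |θ| ^ 4 := by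
    rw [isBigO_iff]
    refine ⟨5/96, ?_⟩
    filter_upwards [Metric.ball_mem_nhds (0:ℝ) one_pos] with θ hθ
    rw [Metric.mem_ball, Real.dist_eq, sub_zero] at hθ
    have := Real.cos_bound hθ.le
    have heq : cos θ - (1 - θ ^ 2 / 2) = cos θ - 1 + θ ^ 2 / 2 := by ring
    rw [heq] at this
    rw [Real.norm_eq_abs, Real.norm_eq_abs, abs_of_nonneg (pow_nonneg (abs_nonneg θ) 4)]
    linarith
  have hTB : (fun θ : ℝ => H' 1 * (cos θ - 1 + θ ^ 2 / 2)) =o[nhds 0]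
      fun θ : ℝ => |θ| ^ 3 := by
    have := (hTB0.trans_isLittleO abs_pow4_isLittleO).const_mul_left (H' 1)
    simpa using this
  have hsum := hTA'.add hTB
  apply hsum.congr_left
  intro θ
  have hβθ : β θ = H (cos θ) := by rw [hβ θ]
  have hβ0 : β 0 = H 1 := by rw [hβ 0, hH, hu]; simp
  rw [hβθ, hβ0, hH'1]
  have hne : l₁ + l₂ ≠ 0 := by positivity
  field_simp
  ring
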